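/- arXiv:2303.11942 — 11 statements merged into one kernel-verified Lean document; each statement's English description precedes it below -/
import Mathlib

section
/- The collection of all parametrizations P : U → 𝔓(X) (U open in some Euclidean space) satisfying the following property forms a diffeology on the power set 𝔓(X): for every r₀ ∈ U with P(r₀) ≠ ∅, there exists an open neighborhood V ⊆ U of r₀ and a plot σ : V → X such that σ(r) ∈ P(r) for every r ∈ V. -/
open Set Function

universe u

/-- A diffeology on a set `X`, encoded via total functions on `Fin n → ℝ`
together with a designated open domain `U`. -/
structure Diffeology' (X : Type u) where
  IsPlot : (n : ℕ) → Set (Fin n → ℝ) → ((Fin n → ℝ) → X) → Prop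
  isOpen_of_isPlot : ∀ {n : ℕ} {U : Set (Fin n → ℝ)} {P : (Fin n → ℝ) → X},
    IsPlot n U P → IsOpen U
  const_isPlot : ∀ (n : ℕ) (U : Set (Fin n → ℝ)), IsOpen U → ∀ x : X,
    IsPlot n U (fun _ => x)
  locality : ∀ {n : ℕ} {U : Set (Fin n → ℝ)} {P : (Fin n → ℝ) → X}, IsOpen U →
    (∀ r ∈ U, ∃ V, IsOpen V ∧ r ∈ V ∧ V ⊆ U ∧ IsPlot n V P) → IsPlot n U P
  smooth_comp : ∀ {n m : ℕ} {U : Set (Fin n → ℝ)} {P : (Fin n → ℝ) → X}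
    {V : Set (Fin m → ℝ)} {F : (Fin m → ℝ) → (Fin n → ℝ)},
    IsPlot n U P → IsOpen V → ContDiffOn ℝ (⊤ : ℕ∞) F V → Set.MapsTo F V U →
    IsPlot m V (P ∘ F)
  plot_congr : ∀ {n : ℕ} {U : Set (Fin n → ℝ)} {P Q : (Fin n → ℝ) → X},
    IsPlot n U P → Set.EqOn P Q U → IsPlot n U Q

/-- The weak power set property: near every parameter with nonempty value there is a
local selection plot. -/
def WeakProp {X : Type u} (D : Diffeology' X)
    (n : ℕ) (U : Set (Fin n → ℝ)) (P : (Fin n → ℝ) → Set X) : Prop :=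
  IsOpen U ∧ ∀ r₀ ∈ U, (P r₀).Nonempty →
    ∃ (V : Set (Fin n → ℝ)) (σ : (Fin n → ℝ) → X),
      IsOpen V ∧ r₀ ∈ V ∧ V ⊆ U ∧ D.IsPlot n V σ ∧ ∀ r ∈ V, σ r ∈ P r

/-- the parametrizations satisfying the weak property (WPD) form a
diffeology on the power set `𝔓(X)`, the weak power set diffeology. -/
theorem weak_power_set_diffeology_exists {X : Type u} (D : Diffeology' X) :
    ∃ Dw : Diffeology' (Set X),
      ∀ (n : ℕ) (U : Set (Fin n → ℝ)) (P : (Fin n → ℝ) → Set X),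
        Dw.IsPlot n U P ↔ WeakProp D n U P := by
  refine ⟨⟨fun n U P => WeakProp D n U P, fun h => h.1, ?_, ?_, ?_, ?_⟩,
    fun n U P => Iff.rfl⟩
  · -- const
    intro n U hU A
    refine ⟨hU, fun r₀ hr₀ ⟨a, ha⟩ => ⟨U, fun _ => a, hU, hr₀, subset_rfl,
      D.const_isPlot n U hU a, fun r _ => ha⟩⟩
  · -- locality
    intro n U P hU h
    refine ⟨hU, fun r₀ hr₀ hne => ?_⟩
    obtain ⟨V, hVo, hr₀V, hVU, _, hV⟩ := h r₀ hr₀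
    obtain ⟨W, σ, hWo, hr₀W, hWV, hσ, hmem⟩ := hV r₀ hr₀V hne
    exact ⟨W, σ, hWo, hr₀W, hWV.trans hVU, hσ, hmem⟩
  · -- smooth_comp
    intro n m U P V F hP hV hF hmaps
    refine ⟨hV, fun r₀ hr₀ hne => ?_⟩
    obtain ⟨W, σ, hWo, hFr₀W, hWU, hσ, hmem⟩ := hP.2 (F r₀) (hmaps hr₀) hne
    have hV' : IsOpen (V ∩ F ⁻¹' W) :=
      (hF.continuousOn).isOpen_inter_preimage hV hWo
    refine ⟨V ∩ F ⁻¹' W, σ ∘ F, hV', ⟨hr₀, hFr₀W⟩, inter_subset_left,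
      D.smooth_comp hσ hV' (hF.mono inter_subset_left)
        (fun r hr => hr.2), fun r hr => hmem (F r) hr.2⟩
  · -- plot_congr
    intro n U P Q hP hPQ
    refine ⟨hP.1, fun r₀ hr₀ hne => ?_⟩
    obtain ⟨V, σ, hVo, hr₀V, hVU, hσ, hmem⟩ := hP.2 r₀ hr₀ (by rwa [hPQ hr₀])
    exact ⟨V, σ, hVo, hr₀V, hVU, hσ, fun r hr => hPQ (hVU hr) ▸ hmem r hr⟩
end

section
/- Let X and Y be diffeological spaces and let φ : X → 𝔓(Y) be a set-valued map that is smooth when 𝔓(Y) carries the union power set diffeology. Then φ is lower semi-continuous with respect to the D-topologies: for every D-open subset O ⊆ Y, the set φ⁻¹(O) = {x ∈ X : φ(x) ∩ O ≠ ∅} is D-open in X. -/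
open Set Function

universe u

/-- The UPD property: `P : U → 𝔓(X)` admits local implicit plots through every point of
every value, where plots of `X` are given by the predicate `Pl`. This characterizes the
plots of the union power set diffeology. -/
def UPDProp {X : Type u} (Pl : (n : ℕ) → Set (Fin n → ℝ) → ((Fin n → ℝ) → X) → Prop)
    (n : ℕ) (U : Set (Fin n → ℝ)) (P : (Fin n → ℝ) → Set X) : Prop :=
  IsOpen U ∧ ∀ r₀ ∈ U, ∀ x₀ ∈ P r₀,
    ∃ (V : Set (Fin n → ℝ)) (σ : (Fin n → ℝ) → X),
      IsOpen V ∧ r₀ ∈ V ∧ V ⊆ U ∧ Pl n V σ ∧ σ r₀ = x₀ ∧ ∀ r ∈ V, σ r ∈ P r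

/-- The D-topology: a set is D-open iff its preimage by every plot is open. -/
def DOpen {X : Type u} (D : Diffeology' X) (O : Set X) : Prop :=
  ∀ (n : ℕ) (U : Set (Fin n → ℝ)) (P : (Fin n → ℝ) → X),
    D.IsPlot n U P → IsOpen {r ∈ U | P r ∈ O}

/-- a set-valued map smooth for the union power set diffeology is lower
semi-continuous for the D-topologies. -/
theorem smooth_set_valued_lsc {X : Type u} {Y : Type u}
    (Dx : Diffeology' X) (Dy : Diffeology' Y) (φ : X → Set Y)
    (hφ : ∀ (n : ℕ) (U : Set (Fin n → ℝ)) (P : (Fin n → ℝ) → X),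
      Dx.IsPlot n U P → UPDProp Dy.IsPlot n U (fun r => φ (P r)))
    (O : Set Y) (hO : DOpen Dy O) :
    DOpen Dx {x | (φ x ∩ O).Nonempty} := by
  intro n U P hP
  obtain ⟨hU, hupd⟩ := hφ n U P hP
  rw [isOpen_iff_forall_mem_open]
  rintro r₀ ⟨hr₀U, y₀, hy₀φ, hy₀O⟩
  obtain ⟨V, σ, hVopen, hr₀V, hVU, hσ, hσr₀, hσφ⟩ := hupd r₀ hr₀U y₀ hy₀φ
  refine ⟨{r ∈ V | σ r ∈ O}, ?_, hO n V σ hσ, hr₀V, hσr₀ ▸ hy₀O⟩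
  rintro r ⟨hrV, hrO⟩
  exact ⟨hVU hrV, σ r, hσφ r hrV, hrO⟩
end

section
/- The canonical map ι : X → 𝔓(X), ι(x) = {x}, is an induction into the union power space 𝔓ᵤ(X): a parametrization P : U → X is a plot of X if and only if ι ∘ P is a plot of the union power set diffeology. -/
open Set Function

universe u

/-- A diffeology on a set `X`, encoded via total functions on `Fin n → ℝ`
together with a designated open domain `U`. -/
structure LocalDiffeology (X : Type u) where
  IsPlot : (n : ℕ) → Set (Fin n → ℝ) → ((Fin n → ℝ) → X) → Prop
  isOpen_of_isPlot : ∀ {n : ℕ} {U : Set (Fin n → ℝ)} {P : (Fin n → ℝ) → X},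
    IsPlot n U P → IsOpen U
  const_isPlot : ∀ (n : ℕ) (U : Set (Fin n → ℝ)), IsOpen U → ∀ x : X,
    IsPlot n U (fun _ => x)
  locality : ∀ {n : ℕ} {U : Set (Fin n → ℝ)} {P : (Fin n → ℝ) → X}, IsOpen U →
    (∀ r ∈ U, ∃ V, IsOpen V ∧ r ∈ V ∧ V ⊆ U ∧ IsPlot n V P) → IsPlot n U P
  smooth_comp : ∀ {n m : ℕ} {U : Set (Fin n → ℝ)} {P : (Fin n → ℝ) → X}
    {V : Set (Fin m → ℝ)} {F : (Fin m → ℝ) → (Fin n → ℝ)},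
    IsPlot n U P → IsOpen V → ContDiffOn ℝ (⊤ : ℕ∞) F V → Set.MapsTo F V U →
    IsPlot m V (P ∘ F)
  plot_congr : ∀ {n : ℕ} {U : Set (Fin n → ℝ)} {P Q : (Fin n → ℝ) → X},
    IsPlot n U P → Set.EqOn P Q U → IsPlot n U Q

/-- the canonical map `ι : X → 𝔓ᵤ(X)`, `ι x = {x}`, is an induction:
`P` is a plot of `X` iff `ι ∘ P` is a plot of the union power set diffeology. -/
theorem singleton_map_induction {X : Type u} (D : LocalDiffeology X)
    (n : ℕ) (U : Set (Fin n → ℝ)) (P : (Fin n → ℝ) → X) :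
    D.IsPlot n U P ↔ UPDProp D.IsPlot n U (fun r => ({P r} : Set X)) := by
  constructor
  · intro h
    refine ⟨D.isOpen_of_isPlot h, fun r₀ hr₀ x₀ hx₀ => ?_⟩
    exact ⟨U, P, D.isOpen_of_isPlot h, hr₀, subset_rfl, h, hx₀.symm, fun r _ => rfl⟩
  · rintro ⟨hU, h⟩
    refine D.locality hU fun r₀ hr₀ => ?_
    obtain ⟨V, σ, hV, hr₀V, hVU, hσ, -, hmem⟩ := h r₀ hr₀ (P r₀) rfl
    exact ⟨V, hV, hr₀V, hVU, D.plot_congr hσ fun r hr => hmem r hr⟩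
end

section
/- Let f : X → Y be a map between diffeological spaces and f⋆ : 𝔓ᵤ(X) → 𝔓ᵤ(Y) the induced map on power sets, f⋆(A) = f(A), where both power sets carry the union power set diffeology. Then f is smooth if and only if f⋆ is smooth. -/
open Set Function

universe u

/-- A diffeology on a set `X`, encoded via total functions on `Fin n → ℝ`
together with a designated open domain `U`. -/
structure DiffeologyData (X : Type u) where
  IsPlot : (n : ℕ) → Set (Fin n → ℝ) → ((Fin n → ℝ) → X) → Prop
  isOpen_of_isPlot : ∀ {n : ℕ} {U : Set (Fin n → ℝ)} {P : (Fin n → ℝ) → X},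
    IsPlot n U P → IsOpen U
  const_isPlot : ∀ (n : ℕ) (U : Set (Fin n → ℝ)), IsOpen U → ∀ x : X,
    IsPlot n U (fun _ => x)
  locality : ∀ {n : ℕ} {U : Set (Fin n → ℝ)} {P : (Fin n → ℝ) → X}, IsOpen U →
    (∀ r ∈ U, ∃ V, IsOpen V ∧ r ∈ V ∧ V ⊆ U ∧ IsPlot n V P) → IsPlot n U P
  smooth_comp : ∀ {n m : ℕ} {U : Set (Fin n → ℝ)} {P : (Fin n → ℝ) → X}
    {V : Set (Fin m → ℝ)} {F : (Fin m → ℝ) → (Fin n → ℝ)},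
    IsPlot n U P → IsOpen V → ContDiffOn ℝ (⊤ : ℕ∞) F V → Set.MapsTo F V U →
    IsPlot m V (P ∘ F)
  plot_congr : ∀ {n : ℕ} {U : Set (Fin n → ℝ)} {P Q : (Fin n → ℝ) → X},
    IsPlot n U P → Set.EqOn P Q U → IsPlot n U Q

/-- `f : X → Y` is smooth iff the induced image map
`f⋆ : 𝔓ᵤ(X) → 𝔓ᵤ(Y)`, `A ↦ f '' A`, is smooth for the union power set diffeologies. -/
theorem smooth_iff_image_map_smooth {X : Type u} {Y : Type u}
    (Dx : DiffeologyData X) (Dy : DiffeologyData Y) (f : X → Y) :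
    (∀ (n : ℕ) (U : Set (Fin n → ℝ)) (P : (Fin n → ℝ) → X),
        Dx.IsPlot n U P → Dy.IsPlot n U (f ∘ P)) ↔
    (∀ (n : ℕ) (U : Set (Fin n → ℝ)) (P : (Fin n → ℝ) → Set X),
        UPDProp Dx.IsPlot n U P → UPDProp Dy.IsPlot n U (fun r => f '' P r)) := by
  constructor
  · intro hf n U P ⟨hU, hP⟩
    refine ⟨hU, fun r₀ hr₀ y₀ hy₀ => ?_⟩
    obtain ⟨x₀, hx₀, rfl⟩ := hy₀
    obtain ⟨V, σ, hV, hr, hVU, hσ, hσ0, hσmem⟩ := hP r₀ hr₀ x₀ hx₀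
    exact ⟨V, f ∘ σ, hV, hr, hVU, hf n V σ hσ, by simp [hσ0],
      fun r hr => ⟨σ r, hσmem r hr, rfl⟩⟩
  · intro hF n U P hP
    have hU := Dx.isOpen_of_isPlot hP
    have h := hF n U (fun r => {P r}) ⟨hU, fun r₀ hr₀ x₀ hx₀ =>
      ⟨U, P, hU, hr₀, subset_rfl, hP, hx₀.symm, fun r _ => rfl⟩⟩
    obtain ⟨-, h⟩ := h
    refine Dy.locality hU fun r hr => ?_
    obtain ⟨V, σ, hV, hrV, hVU, hσ, hσ0, hσmem⟩ := h r hr (f (P r)) ⟨P r, rfl, rfl⟩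
    refine ⟨V, hV, hrV, hVU, Dy.plot_congr hσ fun s hs => ?_⟩
    have := hσmem s hs
    simp only [Set.image_singleton, Set.mem_singleton_iff] at this
    simp [Function.comp, this]
end

section
/- Let f : X → Y be a map between diffeological spaces and f⋆ : 𝔓ᵤ(X) → 𝔓ᵤ(Y) the induced image map on power sets with the union power set diffeologies. Then f is an induction if and only if f⋆ is an induction. -/
open Set Function

universe u

/-- `f` is an induction iff the induced image map
`f⋆ : 𝔓ᵤ(X) → 𝔓ᵤ(Y)` is an induction for the union power set diffeologies. -/
theorem induction_iff_image_map_induction {X : Type u} {Y : Type u}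
    (Dx : Diffeology' X) (Dy : Diffeology' Y) (f : X → Y) :
    (Function.Injective f ∧
      ∀ (n : ℕ) (U : Set (Fin n → ℝ)) (P : (Fin n → ℝ) → X),
        Dx.IsPlot n U P ↔ Dy.IsPlot n U (f ∘ P)) ↔
    (Function.Injective (Set.image f) ∧
      ∀ (n : ℕ) (U : Set (Fin n → ℝ)) (P : (Fin n → ℝ) → Set X),
        UPDProp Dx.IsPlot n U P ↔ UPDProp Dy.IsPlot n U (fun r => f '' P r)) := by
  constructor
  · rintro ⟨hinj, hpl⟩
    refine ⟨Set.image_injective.mpr hinj, fun n U P => ?_⟩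
    constructor
    · rintro ⟨hU, h⟩
      refine ⟨hU, fun r₀ hr₀ y₀ hy₀ => ?_⟩
      obtain ⟨x₀, hx₀, rfl⟩ := hy₀
      obtain ⟨V, σ, hV, hr₀V, hVU, hσ, hσr₀, hσmem⟩ := h r₀ hr₀ x₀ hx₀
      exact ⟨V, f ∘ σ, hV, hr₀V, hVU, (hpl n V σ).mp hσ, by simp [hσr₀],
        fun r hr => ⟨σ r, hσmem r hr, rfl⟩⟩
    · rintro ⟨hU, h⟩
      refine ⟨hU, fun r₀ hr₀ x₀ hx₀ => ?_⟩
      obtain ⟨V, σ, hV, hr₀V, hVU, hσ, hσr₀, hσmem⟩ := h r₀ hr₀ (f x₀) ⟨x₀, hx₀, rfl⟩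
      have hex : ∀ r, ∃ x : X, r ∈ V → x ∈ P r ∧ f x = σ r := by
        intro r
        by_cases hr : r ∈ V
        · obtain ⟨x, hx, hfx⟩ := hσmem r hr
          exact ⟨x, fun _ => ⟨hx, hfx⟩⟩
        · exact ⟨x₀, fun h' => absurd h' hr⟩
      choose τ hτ using hex
      have hplot : Dy.IsPlot n V (f ∘ τ) :=
        Dy.plot_congr hσ (fun r hr => ((hτ r hr).2).symm)
      refine ⟨V, τ, hV, hr₀V, hVU, (hpl n V τ).mpr hplot,
        hinj ?_, fun r hr => (hτ r hr).1⟩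
      rw [(hτ r₀ hr₀V).2, hσr₀]
  · rintro ⟨hinj, hupd⟩
    have hfinj : Function.Injective f := by
      intro a b hab
      have := hinj (show f '' {a} = f '' {b} by simp [hab])
      simpa using this
    refine ⟨hfinj, fun n U P => ?_⟩
    constructor
    · intro hP
      have hU := Dx.isOpen_of_isPlot hP
      have h1 : UPDProp Dx.IsPlot n U (fun r => {P r}) := by
        refine ⟨hU, fun r₀ hr₀ x₀ hx₀ => ⟨U, P, hU, hr₀, subset_rfl, hP, ?_, fun r _ => rfl⟩⟩
        simpa using hx₀.symm
      have h2 := (hupd n U _).mp h1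
      apply Dy.locality hU
      intro r hr
      obtain ⟨V, σ, hV, hrV, hVU, hσ, -, hσmem⟩ := h2.2 r hr (f (P r)) ⟨P r, rfl, rfl⟩
      refine ⟨V, hV, hrV, hVU, Dy.plot_congr hσ fun s hs => ?_⟩
      obtain ⟨x, hx, hfx⟩ := hσmem s hs
      have hx' : x = P s := hx
      simp only [Function.comp_apply, ← hfx, hx']
    · intro hfP
      have hU := Dy.isOpen_of_isPlot hfP
      have h2 : UPDProp Dy.IsPlot n U (fun r => f '' {P r}) := by
        refine ⟨hU, fun r₀ hr₀ y₀ hy₀ => ?_⟩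
        obtain ⟨x, hx, rfl⟩ := hy₀
        have hx' : x = P r₀ := hx
        exact ⟨U, f ∘ P, hU, hr₀, subset_rfl, hfP, congrArg f hx'.symm,
          fun r _ => ⟨P r, rfl, rfl⟩⟩
      have h1 := (hupd n U (fun r => {P r})).mpr h2
      apply Dx.locality hU
      intro r hr
      obtain ⟨V, σ, hV, hrV, hVU, hσ, -, hσmem⟩ := h1.2 r hr (P r) rfl
      refine ⟨V, hV, hrV, hVU, Dx.plot_congr hσ fun s hs => hσmem s hs⟩
end

section
/- Let f : X → Y be a map between diffeological spaces. Then f is a diffeomorphism if and only if the induced image map f⋆ : 𝔓ᵤ(X) → 𝔓ᵤ(Y), f⋆(A) = f(A), is a diffeomorphism of the union power spaces. -/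
open Set Function

universe u

/-- A diffeology on a set `X`, encoded via total functions on `Fin n → ℝ`
together with a designated open domain `U`. -/
structure DiffeologyStr (X : Type u) where
  IsPlot : (n : ℕ) → Set (Fin n → ℝ) → ((Fin n → ℝ) → X) → Prop
  isOpen_of_isPlot : ∀ {n : ℕ} {U : Set (Fin n → ℝ)} {P : (Fin n → ℝ) → X},
    IsPlot n U P → IsOpen U
  const_isPlot : ∀ (n : ℕ) (U : Set (Fin n → ℝ)), IsOpen U → ∀ x : X,
    IsPlot n U (fun _ => x)
  locality : ∀ {n : ℕ} {U : Set (Fin n → ℝ)} {P : (Fin n → ℝ) → X}, IsOpen U →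
    (∀ r ∈ U, ∃ V, IsOpen V ∧ r ∈ V ∧ V ⊆ U ∧ IsPlot n V P) → IsPlot n U P
  smooth_comp : ∀ {n m : ℕ} {U : Set (Fin n → ℝ)} {P : (Fin n → ℝ) → X}
    {V : Set (Fin m → ℝ)} {F : (Fin m → ℝ) → (Fin n → ℝ)},
    IsPlot n U P → IsOpen V → ContDiffOn ℝ (⊤ : ℕ∞) F V → Set.MapsTo F V U →
    IsPlot m V (P ∘ F)
  plot_congr : ∀ {n : ℕ} {U : Set (Fin n → ℝ)} {P Q : (Fin n → ℝ) → X},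
    IsPlot n U P → Set.EqOn P Q U → IsPlot n U Q

lemma singleton_UPD {X : Type u} (D : DiffeologyStr X) {n : ℕ} {U : Set (Fin n → ℝ)}
    {P : (Fin n → ℝ) → X} (h : D.IsPlot n U P) :
    UPDProp D.IsPlot n U (fun r => {P r}) := by
  refine ⟨D.isOpen_of_isPlot h, fun r₀ hr₀ x₀ hx₀ => ?_⟩
  refine ⟨U, P, D.isOpen_of_isPlot h, hr₀, subset_rfl, h, hx₀.symm, fun r _ => rfl⟩

lemma UPD_singleton {X : Type u} (D : DiffeologyStr X) {n : ℕ} {U : Set (Fin n → ℝ)}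
    {P : (Fin n → ℝ) → X} (h : UPDProp D.IsPlot n U (fun r => {P r})) :
    D.IsPlot n U P := by
  obtain ⟨hU, hloc⟩ := h
  refine D.locality hU fun r₀ hr₀ => ?_
  obtain ⟨V, σ, hV, hrV, hVU, hσ, _, hσP⟩ := hloc r₀ hr₀ (P r₀) rfl
  exact ⟨V, hV, hrV, hVU, D.plot_congr hσ fun r hr => hσP r hr⟩

/-- `f : X → Y` is a diffeomorphism iff the induced image map
`f⋆ : 𝔓ᵤ(X) → 𝔓ᵤ(Y)`, `A ↦ f '' A`, is a diffeomorphism of the union power spaces. -/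
theorem diffeomorphism_iff_image_map_diffeomorphism {X : Type u} {Y : Type u}
    (Dx : DiffeologyStr X) (Dy : DiffeologyStr Y) (f : X → Y) :
    ((∃ g : Y → X, (∀ x, g (f x) = x) ∧ (∀ y, f (g y) = y)) ∧
      (∀ (n : ℕ) (U : Set (Fin n → ℝ)) (P : (Fin n → ℝ) → X),
        Dx.IsPlot n U P → Dy.IsPlot n U (f ∘ P)) ∧
      (∀ g : Y → X, (∀ x, g (f x) = x) → (∀ y, f (g y) = y) →
        ∀ (n : ℕ) (U : Set (Fin n → ℝ)) (Q : (Fin n → ℝ) → Y),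
          Dy.IsPlot n U Q → Dx.IsPlot n U (g ∘ Q))) ↔
    ((∃ G : Set Y → Set X, (∀ A : Set X, G (f '' A) = A) ∧ (∀ B : Set Y, f '' (G B) = B)) ∧
      (∀ (n : ℕ) (U : Set (Fin n → ℝ)) (P : (Fin n → ℝ) → Set X),
        UPDProp Dx.IsPlot n U P → UPDProp Dy.IsPlot n U (fun r => f '' P r)) ∧
      (∀ G : Set Y → Set X, (∀ A : Set X, G (f '' A) = A) → (∀ B : Set Y, f '' (G B) = B) →
        ∀ (n : ℕ) (U : Set (Fin n → ℝ)) (Q : (Fin n → ℝ) → Set Y),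
          UPDProp Dy.IsPlot n U Q → UPDProp Dx.IsPlot n U (fun r => G (Q r)))) := by
  constructor
  · rintro ⟨⟨g, hgf, hfg⟩, hf, hg⟩
    refine ⟨⟨fun B => g '' B, fun A => by simp [image_image, hgf],
      fun B => by simp [image_image, hfg]⟩, ?_, ?_⟩
    · rintro n U P ⟨hU, hloc⟩
      refine ⟨hU, fun r₀ hr₀ y₀ hy₀ => ?_⟩
      obtain ⟨x₀, hx₀, rfl⟩ := hy₀
      obtain ⟨V, σ, hV, hrV, hVU, hσ, hσr, hσP⟩ := hloc r₀ hr₀ x₀ hx₀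
      exact ⟨V, f ∘ σ, hV, hrV, hVU, hf n V σ hσ, by simp [hσr],
        fun r hr => ⟨σ r, hσP r hr, rfl⟩⟩
    · intro G hG1 hG2 n U Q hQ
      have hGg : ∀ B, G B = g '' B := by
        intro B
        have hB : f '' (g '' B) = B := by simp [image_image, hfg]
        calc G B = G (f '' (g '' B)) := by rw [hB]
          _ = g '' B := hG1 _
      obtain ⟨hU, hloc⟩ := hQ
      refine ⟨hU, fun r₀ hr₀ x₀ hx₀ => ?_⟩
      simp only [hGg] at hx₀
      obtain ⟨y₀, hy₀, rfl⟩ := hx₀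
      obtain ⟨V, σ, hV, hrV, hVU, hσ, hσr, hσP⟩ := hloc r₀ hr₀ y₀ hy₀
      exact ⟨V, g ∘ σ, hV, hrV, hVU, hg g hgf hfg n V σ hσ, by simp [hσr],
        fun r hr => by simp only [hGg]; exact ⟨σ r, hσP r hr, rfl⟩⟩
  · rintro ⟨⟨G, hG1, hG2⟩, hF, hGs⟩
    have hinj : Function.Injective f := by
      intro a b hab
      have h : ({a} : Set X) = {b} := by
        rw [← hG1 {a}, ← hG1 {b}]
        simp [image_singleton, hab]
      simpa using h
    have hsurj : Function.Surjective f := by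
      intro y
      have h := hG2 {y}
      have hy : y ∈ f '' G {y} := by rw [h]; rfl
      obtain ⟨x, _, hx⟩ := hy
      exact ⟨x, hx⟩
    obtain ⟨g, hfg⟩ := hsurj.hasRightInverse
    have hgf : ∀ x, g (f x) = x := fun x => hinj (hfg (f x))
    refine ⟨⟨g, hgf, hfg⟩, ?_, ?_⟩
    · intro n U P hP
      have h1 := hF n U (fun r => {P r}) (singleton_UPD Dx hP)
      simp only [image_singleton] at h1
      exact UPD_singleton Dy h1
    · intro g' hg'f hfg' n U Q hQ
      have h1 := hGs (fun B => g' '' B)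
        (fun A => by simp [image_image, hg'f])
        (fun B => by simp [image_image, hfg'])
        n U (fun r => {Q r}) (singleton_UPD Dy hQ)
      simp only [image_singleton] at h1
      exact UPD_singleton Dx h1
end

section
/- Let X, Y be diffeological spaces and φ : X → 𝔓*(Y) a set-valued map with nonempty values. If for every x₀ ∈ X and y₀ ∈ φ(x₀) there exist a D-open neighborhood O ⊆ X of x₀ and a smooth map α : O → Y (for the subset diffeology on O) with α(x₀) = y₀ and α(x) ∈ φ(x) for all x ∈ O, then φ is smooth with respect to the union power set diffeology on 𝔓*(Y). -/
open Set Function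

universe u

/-- if through every point of every value of `φ` there is a smooth local
selection defined on a D-open neighborhood (with the subset diffeology), then `φ` is
smooth for the union power set diffeology. -/
theorem local_selections_imply_smooth {X : Type u} {Y : Type u}
    (Dx : Diffeology' X) (Dy : Diffeology' Y) (φ : X → Set Y)
    (hne : ∀ x, (φ x).Nonempty)
    (h : ∀ x₀ : X, ∀ y₀ ∈ φ x₀, ∃ O : Set X, DOpen Dx O ∧ x₀ ∈ O ∧
      ∃ α : X → Y,
        (∀ (n : ℕ) (U : Set (Fin n → ℝ)) (P : (Fin n → ℝ) → X),
          Dx.IsPlot n U P → (∀ r ∈ U, P r ∈ O) → Dy.IsPlot n U (α ∘ P)) ∧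
        α x₀ = y₀ ∧ ∀ x ∈ O, α x ∈ φ x) :
    ∀ (n : ℕ) (U : Set (Fin n → ℝ)) (P : (Fin n → ℝ) → X),
      Dx.IsPlot n U P → UPDProp Dy.IsPlot n U (fun r => φ (P r)) := by
  intro n U P hP
  refine ⟨Dx.isOpen_of_isPlot hP, ?_⟩
  intro r₀ hr₀ y₀ hy₀
  obtain ⟨O, hO, hx₀O, α, hα, hαx₀, hαφ⟩ := h (P r₀) y₀ hy₀
  set W : Set (Fin n → ℝ) := {r ∈ U | P r ∈ O} with hW
  have hWopen : IsOpen W := hO n U P hP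
  have hWU : W ⊆ U := fun r hr => hr.1
  have hPW : Dx.IsPlot n W P := by
    have := Dx.smooth_comp hP hWopen (contDiffOn_id) (fun r hr => hr.1)
    exact this
  have hσ : Dy.IsPlot n W (α ∘ P) := hα n W P hPW (fun r hr => hr.2)
  exact ⟨W, α ∘ P, hWopen, ⟨hr₀, hx₀O⟩, hWU, hσ, hαx₀, fun r hr => hαφ (P r) hr.2⟩
end

section
/- Let X be a diffeological space. The map τ_X : 𝔓ᵤ(X) → 𝔓ᵤ(𝔓ᵤ(X)) sending a subset A ⊆ X to its induced subspace topology τ_X(A) = {A ∩ O : O ⊆ X is D-open}, and the map θ : 𝔓ᵤ(𝔓ᵤ(X)) → 𝔓ᵤ(X) sending a collection 𝒞 of subsets of X to its union ⋃𝒞, are both smooth, and θ ∘ τ_X = id. In particular, τ_X is a smooth injection with a smooth left inverse. -/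
open Set Function

universe u

/-- the map `τ_X : 𝔓ᵤ(X) → 𝔓ᵤ²(X)` sending `A` to its subspace
D-topology `{A ∩ O : O D-open}` and the union map `θ : 𝔓ᵤ²(X) → 𝔓ᵤ(X)`, `𝒞 ↦ ⋃𝒞`,
are both smooth, with `θ ∘ τ_X = id`; in particular `τ_X` is a smooth injection with a
smooth left inverse. -/
theorem tau_and_union_smooth {X : Type u} (D : Diffeology' X) :
    (∀ (n : ℕ) (U : Set (Fin n → ℝ)) (P : (Fin n → ℝ) → Set X),
      UPDProp D.IsPlot n U P →
      UPDProp (UPDProp D.IsPlot) n U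
        (fun r => {B : Set X | ∃ O : Set X, DOpen D O ∧ B = P r ∩ O})) ∧
    (∀ (n : ℕ) (U : Set (Fin n → ℝ)) (Pi : (Fin n → ℝ) → Set (Set X)),
      UPDProp (UPDProp D.IsPlot) n U Pi →
      UPDProp D.IsPlot n U (fun r => ⋃₀ (Pi r))) ∧
    (∀ A : Set X, ⋃₀ {B : Set X | ∃ O : Set X, DOpen D O ∧ B = A ∩ O} = A) ∧
    Function.Injective
      (fun A : Set X => {B : Set X | ∃ O : Set X, DOpen D O ∧ B = A ∩ O}) := by
  have hUniv : DOpen D (Set.univ : Set X) := by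
    intro n U P hP
    have : {r ∈ U | P r ∈ (Set.univ : Set X)} = U := by ext r; simp
    rw [this]; exact D.isOpen_of_isPlot hP
  have hθτ : ∀ A : Set X, ⋃₀ {B : Set X | ∃ O : Set X, DOpen D O ∧ B = A ∩ O} = A := by
    intro A
    apply Set.Subset.antisymm
    · rintro x ⟨B, ⟨O, _, rfl⟩, hx⟩; exact hx.1
    · intro x hx
      exact ⟨A, ⟨Set.univ, hUniv, by simp⟩, hx⟩
  refine ⟨?_, ?_, hθτ, ?_⟩
  · -- τ smooth
    rintro n U P ⟨hU, hP⟩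
    refine ⟨hU, ?_⟩
    rintro r₀ hr₀ B₀ ⟨O, hO, rfl⟩
    refine ⟨U, fun r => P r ∩ O, hU, hr₀, Set.Subset.rfl, ⟨hU, ?_⟩, rfl,
      fun r _ => ⟨O, hO, rfl⟩⟩
    rintro r₁ hr₁ x₀ ⟨hx₀P, hx₀O⟩
    obtain ⟨V, σ, hVopen, hr₁V, hVU, hσ, hσr₁, hσP⟩ := hP r₁ hr₁ x₀ hx₀P
    have hopen : IsOpen {r ∈ V | σ r ∈ O} := hO n V σ hσ
    refine ⟨{r ∈ V | σ r ∈ O}, σ, hopen, ⟨hr₁V, hσr₁ ▸ hx₀O⟩,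
      fun r hr => hVU hr.1, ?_, hσr₁, fun r hr => ⟨hσP r hr.1, hr.2⟩⟩
    exact D.smooth_comp hσ hopen contDiffOn_id (fun r hr => hr.1)
  · -- θ smooth
    rintro n U Pi ⟨hU, hPi⟩
    refine ⟨hU, ?_⟩
    rintro r₀ hr₀ x₀ ⟨B₀, hB₀, hx₀⟩
    obtain ⟨V, Sg, hVopen, hr₀V, hVU, ⟨hVopen', hSg⟩, hSgr₀, hSgPi⟩ := hPi r₀ hr₀ B₀ hB₀
    obtain ⟨V', σ, hV'open, hr₀V', hV'V, hσ, hσr₀, hsS⟩ :=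
      hSg r₀ hr₀V x₀ (hSgr₀ ▸ hx₀)
    exact ⟨V', σ, hV'open, hr₀V', fun r hr => hVU (hV'V hr), hσ, hσr₀,
      fun r hr => ⟨Sg r, hSgPi r (hV'V hr), hsS r hr⟩⟩
  · -- injectivity
    intro A B h
    have := congrArg Set.sUnion h
    simpa [hθτ] using this
end

section
/- Every plot of the strong power set diffeology on 𝔓(X) is a plot of the union power set diffeology; that is, the identity map 𝔓ₛ(X) → 𝔓ᵤ(X) is smooth. -/
open Set Function

universe u

/-- A diffeology on a set `X`, encoded via total functions on `Fin n → ℝ`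
together with a designated open domain `U`. -/
structure PlotDiffeology (X : Type u) where
  IsPlot : (n : ℕ) → Set (Fin n → ℝ) → ((Fin n → ℝ) → X) → Prop
  isOpen_of_isPlot : ∀ {n : ℕ} {U : Set (Fin n → ℝ)} {P : (Fin n → ℝ) → X},
    IsPlot n U P → IsOpen U
  const_isPlot : ∀ (n : ℕ) (U : Set (Fin n → ℝ)), IsOpen U → ∀ x : X,
    IsPlot n U (fun _ => x)
  locality : ∀ {n : ℕ} {U : Set (Fin n → ℝ)} {P : (Fin n → ℝ) → X}, IsOpen U →
    (∀ r ∈ U, ∃ V, IsOpen V ∧ r ∈ V ∧ V ⊆ U ∧ IsPlot n V P) → IsPlot n U P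
  smooth_comp : ∀ {n m : ℕ} {U : Set (Fin n → ℝ)} {P : (Fin n → ℝ) → X}
    {V : Set (Fin m → ℝ)} {F : (Fin m → ℝ) → (Fin n → ℝ)},
    IsPlot n U P → IsOpen V → ContDiffOn ℝ (⊤ : ℕ∞) F V → Set.MapsTo F V U →
    IsPlot m V (P ∘ F)
  plot_congr : ∀ {n : ℕ} {U : Set (Fin n → ℝ)} {P Q : (Fin n → ℝ) → X},
    IsPlot n U P → Set.EqOn P Q U → IsPlot n U Q

/-- A smooth family of `m`-plots of `X` parametrized by an open set `U ⊆ ℝⁿ`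
(the standard functional diffeology on the diffeology `D` of `X`):
each `ρ r = (ρdom r, ρfun r)` is a plot, and locally, on common domains,
`(r, s) ↦ ρfun r s` is a plot of `X` (on `V × W ⊆ ℝⁿ × ℝᵐ ≅ ℝ^(n+m)`). -/
def SmoothFamily {X : Type u} (D : PlotDiffeology X) (n m : ℕ) (U : Set (Fin n → ℝ))
    (ρdom : (Fin n → ℝ) → Set (Fin m → ℝ))
    (ρfun : (Fin n → ℝ) → (Fin m → ℝ) → X) : Prop :=
  IsOpen U ∧ (∀ r ∈ U, D.IsPlot m (ρdom r) (ρfun r)) ∧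
    ∀ r₀ ∈ U, ∀ s₀ ∈ ρdom r₀,
      ∃ (V : Set (Fin n → ℝ)) (W : Set (Fin m → ℝ)),
        IsOpen V ∧ r₀ ∈ V ∧ V ⊆ U ∧ IsOpen W ∧ s₀ ∈ W ∧
        (∀ r ∈ V, W ⊆ ρdom r) ∧
        D.IsPlot (n + m)
          {z | (fun i => z (Fin.castAdd m i)) ∈ V ∧ (fun j => z (Fin.natAdd n j)) ∈ W}
          (fun z => ρfun (fun i => z (Fin.castAdd m i)) (fun j => z (Fin.natAdd n j)))

/-- The strong power set property SPD: every plot of `X` with image in a value `P r₀`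
extends to a local smooth family of plots with images in the nearby values. -/
def SPDProp {X : Type u} (D : PlotDiffeology X)
    (n : ℕ) (U : Set (Fin n → ℝ)) (P : (Fin n → ℝ) → Set X) : Prop :=
  IsOpen U ∧ ∀ r₀ ∈ U, ∀ (m : ℕ) (W₀ : Set (Fin m → ℝ)) (Q₀ : (Fin m → ℝ) → X),
    D.IsPlot m W₀ Q₀ → (∀ s ∈ W₀, Q₀ s ∈ P r₀) →
    ∃ V : Set (Fin n → ℝ), IsOpen V ∧ r₀ ∈ V ∧ V ⊆ U ∧
      ∃ (ρdom : (Fin n → ℝ) → Set (Fin m → ℝ)) (ρfun : (Fin n → ℝ) → (Fin m → ℝ) → X),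
        SmoothFamily D n m V ρdom ρfun ∧ ρdom r₀ = W₀ ∧ ρfun r₀ = Q₀ ∧
        ∀ r ∈ V, ∀ s ∈ ρdom r, ρfun r s ∈ P r

/-- every plot of the strong power set diffeology is a plot of the union
power set diffeology, i.e. the identity `𝔓ₛ(X) → 𝔓ᵤ(X)` is smooth. -/
theorem strong_finer_than_union {X : Type u} (D : PlotDiffeology X)
    (n : ℕ) (U : Set (Fin n → ℝ)) (P : (Fin n → ℝ) → Set X)
    (h : SPDProp D n U P) : UPDProp D.IsPlot n U P := by
  obtain ⟨hU, hspd⟩ := h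
  refine ⟨hU, fun r₀ hr₀ x₀ hx₀ => ?_⟩
  -- apply SPD to the constant 0-plot with value x₀
  obtain ⟨V₁, hV₁o, hr₀V₁, hV₁U, ρdom, ρfun, ⟨_, hplots, hloc⟩, hdom₀, hfun₀, hval⟩ :=
    hspd r₀ hr₀ 0 Set.univ (fun _ => x₀)
      (D.const_isPlot 0 Set.univ isOpen_univ x₀) (fun _ _ => hx₀)
  set s₀ : Fin 0 → ℝ := fun j => j.elim0 with hs₀
  have hs₀mem : s₀ ∈ ρdom r₀ := by rw [hdom₀]; trivial
  obtain ⟨V, W, hVo, hr₀V, hVV₁, hWo, hs₀W, hWdom, hplot⟩ := hloc r₀ hr₀V₁ s₀ hs₀mem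
  refine ⟨V, fun r => ρfun r s₀, hVo, hr₀V, hVV₁.trans hV₁U, ?_, ?_, ?_⟩
  · -- the map r ↦ ρfun r s₀ is a plot on V
    let F : (Fin n → ℝ) → (Fin (n + 0) → ℝ) := fun r => r
    have hF : ContDiffOn ℝ (⊤ : ℕ∞) F V := contDiffOn_id
    have hmaps : Set.MapsTo F V
        {z : Fin (n + 0) → ℝ |
          (fun i => z (Fin.castAdd 0 i)) ∈ V ∧ (fun j => z (Fin.natAdd n j)) ∈ W} := by
      intro r hr
      constructor
      · have : (fun i => F r (Fin.castAdd 0 i)) = r := by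
          funext i; show r _ = r i; congr 1
        show (fun i => F r (Fin.castAdd 0 i)) ∈ V
        rw [this]; exact hr
      · have : (fun j : Fin 0 => F r (Fin.natAdd n j)) = s₀ := by
          funext j; exact j.elim0
        show (fun j => F r (Fin.natAdd n j)) ∈ W
        rw [this]; exact hs₀W
    have hcomp := D.smooth_comp hplot hVo hF hmaps
    refine D.plot_congr hcomp ?_
    intro r hr
    show ρfun (fun i => F r (Fin.castAdd 0 i)) (fun j => F r (Fin.natAdd n j)) = ρfun r s₀
    have h1 : (fun i => F r (Fin.castAdd 0 i)) = r := by
      funext i; show r _ = r i; congr 1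
    have h2 : (fun j : Fin 0 => F r (Fin.natAdd n j)) = s₀ := by
      funext j; exact j.elim0
    rw [h1, h2]
  · show ρfun r₀ s₀ = x₀
    rw [hfun₀]
  · intro r hr
    exact hval r (hVV₁ hr) s₀ (hWdom r hr hs₀W)
end

section
/- Let X be a diffeological space with diffeology 𝒟, and equip 𝒟 with the standard functional diffeology (a parametrization ρ : U → 𝒟 is a plot iff for all r₀ ∈ U and s₀ ∈ dom(ρ(r₀)), there exist neighborhoods V of r₀ and W of s₀ with W ⊆ dom(ρ(r)) for all r ∈ V and (r,s) ↦ ρ(r)(s) a plot of X on V × W). Then the image map Im : 𝒟 → 𝔓ᵤ(X), P ↦ Im(P), is smooth for the union power set diffeology. -/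
open Set Function

universe u

/-- the image map `Im : 𝒟 → 𝔓ᵤ(X)`, `P ↦ Im(P)`, is smooth: it sends
smooth families of plots (plots of the standard functional diffeology on `𝒟`) to plots
of the union power set diffeology. -/
theorem image_map_smooth {X : Type u} (D : PlotDiffeology X)
    (n m : ℕ) (U : Set (Fin n → ℝ))
    (ρdom : (Fin n → ℝ) → Set (Fin m → ℝ))
    (ρfun : (Fin n → ℝ) → (Fin m → ℝ) → X)
    (h : SmoothFamily D n m U ρdom ρfun) :
    UPDProp D.IsPlot n U (fun r => ρfun r '' ρdom r) := by
  obtain ⟨hU, hplot, hloc⟩ := h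
  refine ⟨hU, fun r₀ hr₀ x₀ hx₀ => ?_⟩
  obtain ⟨s₀, hs₀, rfl⟩ := hx₀
  obtain ⟨V, W, hV, hr₀V, hVU, hW, hs₀W, hWsub, hbig⟩ := hloc r₀ hr₀ s₀ hs₀
  set F : (Fin n → ℝ) → (Fin (n + m) → ℝ) := fun r => Fin.append r s₀ with hF
  have hF1 : ∀ r, (fun i => F r (Fin.castAdd m i)) = r := by
    intro r; funext i; simp [hF, Fin.append_left]
  have hF2 : ∀ r, (fun j => F r (Fin.natAdd n j)) = s₀ := by
    intro r; funext j; simp [hF, Fin.append_right]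
  have hFsmooth : ContDiffOn ℝ (⊤ : ℕ∞) F V := by
    apply ContDiff.contDiffOn
    apply contDiff_pi.2
    intro k
    refine Fin.addCases (fun i => ?_) (fun j => ?_) k
    · simpa [hF, Fin.append_left] using (contDiff_pi.1 contDiff_id i)
    · simpa [hF, Fin.append_right] using contDiff_const
  have hmaps : Set.MapsTo F V
      {z | (fun i => z (Fin.castAdd m i)) ∈ V ∧ (fun j => z (Fin.natAdd n j)) ∈ W} := by
    intro r hr; constructor
    · rw [hF1]; exact hr
    · rw [hF2]; exact hs₀W
  have hcomp := D.smooth_comp hbig hV hFsmooth hmaps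
  refine ⟨V, fun r => ρfun r s₀, hV, hr₀V, hVU, ?_, rfl, fun r hr => ⟨s₀, hWsub r hr hs₀W, rfl⟩⟩
  apply D.plot_congr hcomp
  intro r _
  simp only [Function.comp_apply, hF1, hF2]
end

section
/- On 𝔓(ℝ) with the globally projectable diffeology 𝒫_{gp,D} generated by the diffeomorphism group action, the intersection map is not smooth: the paths P₁(t) = {t} and P₂(t) = {−t} (orbits of {0} under the translations x ↦ x + t and x ↦ x − t) are plots of 𝒫_{gp,D}, but t ↦ P₁(t) ∩ P₂(t), which equals {0} at t = 0 and ∅ for t ≠ 0, is not a plot of 𝒫_{gp,D}, because ∅ is isolated in that diffeology (every plot through ∅ is locally constant equal to ∅ near any parameter where it takes the value ∅). -/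
open Set Function

/-- A generating (globally projectable) parametrization of `𝔓*(ℝ)` for the diffeology
`𝒫_{gp,D}`: the orbit of a fixed nonempty set `A ⊆ ℝ` under a smooth family of
diffeomorphisms of `ℝ` (smooth family: both the evaluation and the evaluation of the
inverses are smooth). -/
def GPBase (n : ℕ) (U : Set (Fin n → ℝ)) (P : (Fin n → ℝ) → Set ℝ) : Prop :=
  IsOpen U ∧ ∃ (φ : (Fin n → ℝ) → ℝ → ℝ) (A : Set ℝ), A.Nonempty ∧
    (∀ r ∈ U, Function.Bijective (φ r)) ∧
    ContDiffOn ℝ (⊤ : ℕ∞) (fun p : (Fin n → ℝ) × ℝ => φ p.1 p.2) (U ×ˢ Set.univ) ∧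
    ContDiffOn ℝ (⊤ : ℕ∞) (fun p : (Fin n → ℝ) × ℝ => Function.invFun (φ p.1) p.2)
      (U ×ˢ Set.univ) ∧
    ∀ r ∈ U, P r = φ r '' A

/-- A plot of the globally projectable diffeology `𝒫_{gp,D}` on `𝔓(ℝ)`: locally either
constant equal to `∅` or a generating parametrization. -/
def GPPlot (n : ℕ) (U : Set (Fin n → ℝ)) (P : (Fin n → ℝ) → Set ℝ) : Prop :=
  IsOpen U ∧ ∀ r ∈ U, ∃ V : Set (Fin n → ℝ), IsOpen V ∧ r ∈ V ∧ V ⊆ U ∧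
    ((∀ s ∈ V, P s = ∅) ∨ GPBase n V P)

lemma bij_add (c : ℝ) : Function.Bijective (fun x : ℝ => x + c) :=
  ⟨fun a b h => by simpa using h, fun y => ⟨y - c, by ring⟩⟩

lemma invFun_add (c y : ℝ) : Function.invFun (fun x : ℝ => x + c) y = y - c := by
  have hb := bij_add c
  have h := Function.invFun_eq (f := fun x : ℝ => x + c) (hb.surjective y)
  apply hb.injective
  simp only
  linarith

lemma contdiff_eval : ContDiff ℝ (⊤ : ℕ∞) (fun r : Fin 1 → ℝ => r 0) :=
  (ContinuousLinearMap.proj (R := ℝ) (φ := fun _ : Fin 1 => ℝ) 0).contDiff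

lemma gpbase_trans (ε : ℝ) : GPBase 1 Set.univ (fun r => ({ε * r 0} : Set ℝ)) := by
  refine ⟨isOpen_univ, fun r x => x + ε * r 0, {0}, ⟨0, rfl⟩, fun r _ => bij_add _,
    ?_, ?_, ?_⟩
  · exact (contDiff_snd.add ((contDiff_const.mul contdiff_eval).comp contDiff_fst)).contDiffOn
  · have h1 : ContDiff ℝ (⊤ : ℕ∞) (fun p : (Fin 1 → ℝ) × ℝ => p.2 - ε * p.1 0) :=
      contDiff_snd.sub ((contDiff_const.mul contdiff_eval).comp contDiff_fst)
    refine h1.contDiffOn.congr ?_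
    intro p _
    exact invFun_add _ _
  · intro r _
    simp

/-- on `𝔓(ℝ)` with the globally projectable diffeology `𝒫_{gp,D}`, the
paths `P₁ t = {t}` and `P₂ t = {-t}` (orbits of `{0}` under translations) are plots, the
empty set is isolated (every plot is locally constant `∅` near any parameter where its
value is `∅`), and the intersection `t ↦ P₁ t ∩ P₂ t` is not a plot; hence the
intersection map is not smooth. -/
theorem intersection_not_smooth_gpD :
    GPPlot 1 Set.univ (fun r => ({r 0} : Set ℝ)) ∧
    GPPlot 1 Set.univ (fun r => ({-(r 0)} : Set ℝ)) ∧
    (∀ (n : ℕ) (U : Set (Fin n → ℝ)) (P : (Fin n → ℝ) → Set ℝ), GPPlot n U P →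
      ∀ r₀ ∈ U, P r₀ = ∅ → ∃ V : Set (Fin n → ℝ), IsOpen V ∧ r₀ ∈ V ∧
        ∀ r ∈ V, P r = ∅) ∧
    ¬ GPPlot 1 Set.univ (fun r => ({r 0} ∩ {-(r 0)} : Set ℝ)) := by
  refine ⟨?_, ?_, ?_, ?_⟩
  · refine ⟨isOpen_univ, fun r _ => ⟨Set.univ, isOpen_univ, trivial, le_rfl, Or.inr ?_⟩⟩
    have h := gpbase_trans 1
    simpa [one_mul] using h
  · refine ⟨isOpen_univ, fun r _ => ⟨Set.univ, isOpen_univ, trivial, le_rfl, Or.inr ?_⟩⟩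
    have h := gpbase_trans (-1)
    simpa [neg_one_mul] using h
  · rintro n U P ⟨_, hloc⟩ r₀ hr₀ hP0
    obtain ⟨V, hVopen, hr₀V, _, hcase⟩ := hloc r₀ hr₀
    rcases hcase with h | ⟨_, φ, A, hA, hbij, _, _, hrep⟩
    · exact ⟨V, hVopen, hr₀V, h⟩
    · exfalso
      have : (P r₀).Nonempty := by
        rw [hrep r₀ hr₀V]
        exact hA.image _
      rw [hP0] at this
      exact Set.not_nonempty_empty this
  · rintro ⟨_, hloc⟩
    obtain ⟨V, hVopen, h0V, _, hcase⟩ := hloc (fun _ => 0) trivial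
    have hP0 : ({(fun _ : Fin 1 => (0:ℝ)) 0} ∩ {-((fun _ : Fin 1 => (0:ℝ)) 0)} : Set ℝ)
        = {0} := by simp
    -- find a point s ∈ V with s 0 ≠ 0
    have hcont : Continuous (fun t : ℝ => (fun _ : Fin 1 => t)) :=
      continuous_pi fun _ => continuous_id
    have hWopen : IsOpen ((fun t : ℝ => (fun _ : Fin 1 => t)) ⁻¹' V) :=
      hVopen.preimage hcont
    have h0W : (0:ℝ) ∈ (fun t : ℝ => (fun _ : Fin 1 => t)) ⁻¹' V := h0V
    obtain ⟨ε, hε, hball⟩ := Metric.isOpen_iff.mp hWopen 0 h0W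
    have htW : (ε/2) ∈ (fun t : ℝ => (fun _ : Fin 1 => t)) ⁻¹' V := by
      apply hball
      rw [Metric.mem_ball, Real.dist_eq, sub_zero, abs_of_pos (by linarith)]
      linarith
    have htne : (ε/2 : ℝ) ≠ 0 := by positivity
    set s : Fin 1 → ℝ := fun _ => ε/2 with hs
    have hsV : s ∈ V := htW
    have hPs : ({s 0} ∩ {-(s 0)} : Set ℝ) = ∅ := by
      ext x
      simp only [Set.mem_inter_iff, Set.mem_singleton_iff, Set.mem_empty_iff_false, iff_false]
      rintro ⟨rfl, h⟩
      have : s 0 = 0 := by linarith [h]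
      exact htne this
    rcases hcase with h | ⟨_, φ, A, hA, hbij, _, _, hrep⟩
    · simpa using h (fun _ => 0) h0V
    · have h2 : ({s 0} ∩ {-(s 0)} : Set ℝ) = φ s '' A := hrep s hsV
      rw [hPs] at h2
      exact Set.not_nonempty_empty (h2 ▸ hA.image (φ s))
end
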